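/- Completeness of quantitative deduction: for every quantitative definite clause program P and every atom a, if the minimal model value v = A a (where A is the pointwise supremum of the P-chain) satisfies v > 0, then Derives P a v holds, i.e., there is a proof tree for a from P with root value exactly v. -/

import Mathlib

structure QClause (α : Type*) where
  head : α
  body : List α
  factor : ℝ

variable {α : Type*}

/-- The minimum of the values of an interpretation over a list of atoms,
with the empty list yielding 1. -/
def bodyMin (I : α → ℝ) (l : List α) : ℝ := (l.map I).foldr min 1

/-- A quantitative definite clause program: a finite set of clauses whose
factors lie in (0,1]. -/
def QProgram (P : Set (QClause α)) : Prop :=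
  P.Finite ∧ ∀ c ∈ P, 0 < c.factor ∧ c.factor ≤ 1

/-- An interpretation assigns to each atom a value in [0,1]. -/
def IsInterp (I : α → ℝ) : Prop := ∀ a, 0 ≤ I a ∧ I a ≤ 1

/-- An interpretation is a model of `P` iff it is an interpretation and for
every clause `(h, [b₁,…,b_k], f)` of `P`, `I h ≥ f * min {I b₁, …, I b_k}`. -/
def IsModel (P : Set (QClause α)) (I : α → ℝ) : Prop :=
  IsInterp I ∧ ∀ c ∈ P, c.factor * bodyMin I c.body ≤ I c.head

/-- The `P`-chain: `A₀ a = 0` and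
`A_{i+1} a = sup { f * min {A_i b₁, …, A_i b_k} : (a,[b₁,…,b_k],f) ∈ P }`
(in ℝ, `sSup ∅ = 0`). -/
noncomputable def chain (P : Set (QClause α)) : ℕ → α → ℝ
  | 0, _ => 0
  | i + 1, a =>
      sSup {x | ∃ c ∈ P, c.head = a ∧ x = c.factor * bodyMin (chain P i) c.body}

/-- Derivability (proof trees): `Derives P a v` holds iff there is a clause
`(a, [b₁,…,b_k], f) ∈ P` and values `v₁,…,v_k` with `Derives P bⱼ vⱼ` for each
`j` and `v = f * min {v₁, …, v_k}` (min over an empty list is 1). -/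
inductive Derives (P : Set (QClause α)) : α → ℝ → Prop where
  | step (c : QClause α) (hc : c ∈ P) (vs : List ℝ) (hlen : vs.length = c.body.length)
      (hbody : ∀ i : ℕ, ∀ hb : i < c.body.length, ∀ hv : i < vs.length,
        Derives P (c.body.get ⟨i, hb⟩) (vs.get ⟨i, hv⟩)) :
      Derives P c.head (c.factor * vs.foldr min 1)

lemma bodyMin_cons (I : α → ℝ) (b : α) (l : List α) :
    bodyMin I (b :: l) = min (I b) (bodyMin I l) := rfl

lemma bodyMin_nonneg {I : α → ℝ} (hI : ∀ a, 0 ≤ I a) (l : List α) : 0 ≤ bodyMin I l := by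
  induction l with
  | nil => norm_num [bodyMin]
  | cons b t ih => rw [bodyMin_cons]; exact le_min (hI b) ih

lemma bodyMin_le_one (I : α → ℝ) (l : List α) : bodyMin I l ≤ 1 := by
  induction l with
  | nil => norm_num [bodyMin]
  | cons b t ih => rw [bodyMin_cons]; exact le_trans (min_le_right _ _) ih

lemma bodyMin_le {I : α → ℝ} {l : List α} {b : α} (hb : b ∈ l) : bodyMin I l ≤ I b := by
  induction l with
  | nil => simp at hb
  | cons x t ih =>
      rw [bodyMin_cons]
      rcases List.mem_cons.1 hb with h | h
      · subst h; exact min_le_left _ _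
      · exact le_trans (min_le_right _ _) (ih h)

lemma bodyMin_mono {I J : α → ℝ} (h : ∀ a, I a ≤ J a) (l : List α) :
    bodyMin I l ≤ bodyMin J l := by
  induction l with
  | nil => exact le_rfl
  | cons b t ih => rw [bodyMin_cons, bodyMin_cons]; exact min_le_min (h b) ih

lemma chainSet_finite {P : Set (QClause α)} (hP : QProgram P) (i : ℕ) (a : α) :
    {x | ∃ c ∈ P, c.head = a ∧ x = c.factor * bodyMin (chain P i) c.body}.Finite := by
  apply Set.Finite.subset (hP.1.image fun c => c.factor * bodyMin (chain P i) c.body)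
  rintro x ⟨c, hc, -, rfl⟩
  exact ⟨c, hc, rfl⟩

lemma chain_nonneg {P : Set (QClause α)} (hP : QProgram P) (i : ℕ) (a : α) :
    0 ≤ chain P i a := by
  induction i generalizing a with
  | zero => simp [chain]
  | succ i ih =>
      apply Real.sSup_nonneg
      rintro x ⟨c, hc, -, rfl⟩
      exact mul_nonneg (hP.2 c hc).1.le (bodyMin_nonneg ih _)

lemma chain_le_one {P : Set (QClause α)} (hP : QProgram P) (i : ℕ) (a : α) :
    chain P i a ≤ 1 := by
  induction i generalizing a with
  | zero => simp [chain]
  | succ i ih =>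
      apply Real.sSup_le _ zero_le_one
      rintro x ⟨c, hc, -, rfl⟩
      calc c.factor * bodyMin (chain P i) c.body
          ≤ 1 * 1 := mul_le_mul (hP.2 c hc).2 (bodyMin_le_one _ _)
            (bodyMin_nonneg (chain_nonneg hP i) _) zero_le_one
        _ = 1 := one_mul 1

lemma chain_mono {P : Set (QClause α)} (hP : QProgram P) (a : α) :
    Monotone fun i => chain P i a := by
  have key : ∀ i, ∀ b, chain P i b ≤ chain P (i + 1) b := by
    intro i
    induction i with
    | zero => intro b; rw [show chain P 0 b = 0 from rfl]; exact chain_nonneg hP 1 b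
    | succ i ih =>
        intro b
        apply Real.sSup_le _ (chain_nonneg hP _ b)
        rintro x ⟨c, hc, hh, rfl⟩
        calc c.factor * bodyMin (chain P i) c.body
            ≤ c.factor * bodyMin (chain P (i+1)) c.body :=
              mul_le_mul_of_nonneg_left (bodyMin_mono ih _) (hP.2 c hc).1.le
          _ ≤ chain P (i + 2) b :=
              le_csSup (chainSet_finite hP (i+1) b).bddAbove ⟨c, hc, hh, rfl⟩
  exact monotone_nat_of_le_succ fun i => key i a


lemma bodyMin_mem {I : α → ℝ} {M : Submonoid ℝ}
    (hI : ∀ a, I a = 0 ∨ I a ∈ M) (l : List α) :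
    bodyMin I l = 0 ∨ bodyMin I l ∈ M := by
  induction l with
  | nil => exact Or.inr M.one_mem
  | cons b t ih =>
      rw [bodyMin_cons]
      rcases le_total (I b) (bodyMin I t) with h | h
      · rw [min_eq_left h]; exact hI b
      · rw [min_eq_right h]; exact ih

lemma chain_mem {P : Set (QClause α)} (hP : QProgram P) :
    ∀ (i : ℕ) (a : α),
      chain P i a = 0 ∨ chain P i a ∈ Submonoid.closure (QClause.factor '' P) := by
  intro i
  induction i with
  | zero => intro a; exact Or.inl rfl
  | succ i ih =>
      intro a
      rcases Set.eq_empty_or_nonempty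
        {x | ∃ c ∈ P, c.head = a ∧ x = c.factor * bodyMin (chain P i) c.body} with he | hne
      · left
        show sSup _ = 0
        rw [he, Real.sSup_empty]
      · have hmem := hne.csSup_mem (chainSet_finite hP i a)
        obtain ⟨c, hc, -, hx⟩ := hmem
        have hf : c.factor ∈ Submonoid.closure (QClause.factor '' P) :=
          Submonoid.subset_closure ⟨c, hc, rfl⟩
        have hchain : chain P (i + 1) a = c.factor * bodyMin (chain P i) c.body := hx
        rcases bodyMin_mem ih c.body with h0 | hm
        · left; rw [hchain, h0, mul_zero]
        · right; rw [hchain]; exact Submonoid.mul_mem _ hf hm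

lemma derives_chain {P : Set (QClause α)} (hP : QProgram P) :
    ∀ (i : ℕ) (a : α), 0 < chain P i a → Derives P a (chain P i a) := by
  intro i
  induction i with
  | zero => intro a h; simp [chain] at h
  | succ i ih =>
      intro a h
      have hne : {x | ∃ c ∈ P, c.head = a ∧
          x = c.factor * bodyMin (chain P i) c.body}.Nonempty := by
        rcases Set.eq_empty_or_nonempty
          {x | ∃ c ∈ P, c.head = a ∧ x = c.factor * bodyMin (chain P i) c.body} with he | hne
        · exfalso
          have : chain P (i + 1) a = 0 := by
            show sSup _ = 0; rw [he, Real.sSup_empty]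
          rw [this] at h; exact lt_irrefl 0 h
        · exact hne
      obtain ⟨c, hc, hh, hx⟩ := hne.csSup_mem (chainSet_finite hP i a)
      have hchain : chain P (i + 1) a = c.factor * bodyMin (chain P i) c.body := hx
      have hbpos : 0 < bodyMin (chain P i) c.body := by
        by_contra hb
        push_neg at hb
        have : c.factor * bodyMin (chain P i) c.body ≤ 0 :=
          mul_nonpos_of_nonneg_of_nonpos (hP.2 c hc).1.le hb
        rw [hchain] at h; linarith
      have hD : Derives P c.head (c.factor * (c.body.map (chain P i)).foldr min 1) := by
        refine Derives.step c hc (c.body.map (chain P i)) (by simp) ?_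
        intro j hb hv
        simp only [List.get_eq_getElem, List.getElem_map]
        exact ih _ (lt_of_lt_of_le hbpos (bodyMin_le (c.body.get_mem ⟨j, hb⟩)))
      have hbm : (c.body.map (chain P i)).foldr min 1 = bodyMin (chain P i) c.body := rfl
      rw [hbm, ← hchain, hh] at hD
      exact hD

lemma filter_ne_one_prod : ∀ l : List ℝ, (l.filter (fun x => !decide (x = 1))).prod = l.prod := by
  intro l
  induction l with
  | nil => rfl
  | cons x t ih =>
      rcases eq_or_ne x 1 with h | h
      · simp [List.filter_cons, h, ih]
      · simp [List.filter_cons, h, ih]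

lemma list_prod_nonneg : ∀ l : List ℝ, (∀ x ∈ l, 0 ≤ x) → 0 ≤ l.prod := by
  intro l
  induction l with
  | nil => intro _; norm_num
  | cons x t ih =>
      intro h
      rw [List.prod_cons]
      exact mul_nonneg (h x (by simp)) (ih fun y hy => h y (by simp [hy]))

lemma list_prod_le_pow (g : ℝ) (hg : 0 ≤ g) :
    ∀ l : List ℝ, (∀ x ∈ l, 0 ≤ x ∧ x ≤ g) → l.prod ≤ g ^ l.length := by
  intro l
  induction l with
  | nil => intro _; norm_num
  | cons x t ih =>
      intro h
      rw [List.prod_cons, List.length_cons, pow_succ, mul_comm (g ^ t.length) g]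
      exact mul_le_mul (h x (by simp)).2 (ih fun y hy => h y (by simp [hy]))
        (list_prod_nonneg t fun y hy => (h y (by simp [hy])).1) hg

noncomputable def prodSet (F : Finset ℝ) : ℕ → Finset ℝ
  | 0 => {1}
  | K + 1 => prodSet F K ∪ Finset.image₂ (· * ·) F (prodSet F K)

lemma one_mem_prodSet (F : Finset ℝ) : ∀ K, (1 : ℝ) ∈ prodSet F K := by
  intro K
  induction K with
  | zero => simp [prodSet]
  | succ K ih => simp [prodSet]; exact Or.inl ih

lemma list_prod_mem_prodSet (F : Finset ℝ) :
    ∀ (l : List ℝ) (K : ℕ), (∀ x ∈ l, x ∈ F) → l.length ≤ K → l.prod ∈ prodSet F K := by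
  intro l
  induction l with
  | nil => intro K _ _; simpa using one_mem_prodSet F K
  | cons x t ih =>
      intro K h hlen
      cases K with
      | zero => simp at hlen
      | succ K =>
          rw [List.prod_cons]
          have := ih K (fun y hy => h y (by simp [hy])) (by simpa using hlen)
          exact Finset.mem_union.2 (Or.inr
            (Finset.mem_image₂.2 ⟨x, h x (by simp), t.prod, this, rfl⟩))

lemma exists_K (F : Finset ℝ) (hF : ∀ f ∈ F, 0 < f ∧ f ≤ 1) {δ : ℝ} (hδ : 0 < δ) :
    ∃ K, ∀ v ∈ Submonoid.closure (F : Set ℝ), δ ≤ v → v ∈ (prodSet F K : Set ℝ) := by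
  by_cases hne : (F.filter (fun x => x < 1)).Nonempty
  · set F1 := F.filter (fun x => x < 1) with hF1
    set g := F1.max' hne with hg
    have hgF1 : g ∈ F1 := F1.max'_mem hne
    have hg0 : 0 < g := (hF g (Finset.mem_filter.1 hgF1).1).1
    have hg1 : g < 1 := (Finset.mem_filter.1 hgF1).2
    obtain ⟨K, hK⟩ := exists_pow_lt_of_lt_one hδ hg1
    refine ⟨K, fun v hv hδv => ?_⟩
    obtain ⟨l, hl, hlp⟩ := Submonoid.exists_list_of_mem_closure hv
    set l' := l.filter (fun x => !decide (x = 1)) with hl'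
    have hl'p : l'.prod = v := by rw [hl', filter_ne_one_prod, hlp]
    have hmem : ∀ x ∈ l', x ∈ F ∧ x ≤ g := by
      intro x hx
      rw [hl', List.mem_filter] at hx
      have hxF : x ∈ F := hl x hx.1
      have hx1 : x ≠ 1 := by simpa using hx.2
      have : x < 1 := lt_of_le_of_ne (hF x hxF).2 hx1
      exact ⟨hxF, Finset.le_max' F1 x (Finset.mem_filter.2 ⟨hxF, this⟩)⟩
    have hlen : l'.length ≤ K := by
      by_contra hlen
      push_neg at hlen
      have h1 : l'.prod ≤ g ^ l'.length :=
        list_prod_le_pow g hg0.le l' fun x hx => ⟨(hF x (hmem x hx).1).1.le, (hmem x hx).2⟩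
      have h2 : g ^ l'.length ≤ g ^ K := pow_le_pow_of_le_one hg0.le hg1.le hlen.le
      linarith [hδv.trans_eq hl'p.symm]
    rw [← hl'p]
    exact_mod_cast list_prod_mem_prodSet F l' K (fun x hx => (hmem x hx).1) hlen
  · refine ⟨0, fun v hv _ => ?_⟩
    obtain ⟨l, hl, hlp⟩ := Submonoid.exists_list_of_mem_closure hv
    have : ∀ x ∈ l, x = 1 := by
      intro x hx
      have hxF := hl x hx
      by_contra h1
      have : x < 1 := lt_of_le_of_ne (hF x hxF).2 h1
      exact hne ⟨x, Finset.mem_filter.2 ⟨hxF, this⟩⟩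
    have : l.prod = 1 := List.prod_eq_one this
    rw [← hlp, this]
    simpa using one_mem_prodSet F 0

/-- Completeness: if the minimal model value of `a` is positive, then it is
derivable at exactly that value. -/
theorem stmt_10 (P : Set (QClause α)) (hP : QProgram P) (a : α)
    (hpos : 0 < ⨆ i : ℕ, chain P i a) :
    Derives P a (⨆ i : ℕ, chain P i a) := by
  classical
  set u : ℕ → ℝ := fun i => chain P i a with hu
  have hmono : Monotone u := chain_mono hP a
  have hbdd : BddAbove (Set.range u) := ⟨1, by rintro x ⟨i, rfl⟩; exact chain_le_one hP i a⟩
  have hex : ∃ i, 0 < u i := by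
    by_contra hcon
    push_neg at hcon
    have : (⨆ i : ℕ, chain P i a) ≤ 0 := ciSup_le hcon
    linarith
  obtain ⟨i₀, hi₀⟩ := hex
  set F : Finset ℝ := hP.1.toFinset.image QClause.factor with hF
  have hFcoe : (F : Set ℝ) = QClause.factor '' P := by
    rw [hF, Finset.coe_image, Set.Finite.coe_toFinset]
  have hFok : ∀ f ∈ F, 0 < f ∧ f ≤ 1 := by
    intro f hf
    rw [← Finset.mem_coe, hFcoe] at hf
    obtain ⟨c, hc, rfl⟩ := hf
    exact hP.2 c hc
  obtain ⟨K, hK⟩ := exists_K F hFok hi₀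
  set R : Set ℝ := u '' Set.Ici i₀ with hR
  have hRsub : R ⊆ (prodSet F K : Set ℝ) := by
    rintro x ⟨i, hi, rfl⟩
    have hle : u i₀ ≤ u i := hmono hi
    have hpos' : 0 < u i := lt_of_lt_of_le hi₀ hle
    rcases chain_mem hP i a with h0 | hm
    · have hz : u i = 0 := h0
      rw [hz] at hpos'
      exact absurd hpos' (lt_irrefl 0)
    · rw [← hFcoe] at hm
      exact hK (u i) hm hle
  have hRfin : R.Finite := ((prodSet F K).finite_toSet).subset hRsub
  have hRne : R.Nonempty := ⟨u i₀, i₀, Set.self_mem_Ici, rfl⟩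
  obtain ⟨N, hN, hNval⟩ := hRne.csSup_mem hRfin
  have hNi₀ : i₀ ≤ N := hN
  have hsup : (⨆ i : ℕ, chain P i a) = u N := by
    apply le_antisymm
    · apply ciSup_le
      intro i
      have h1 : u i ≤ u (max i i₀) := hmono (le_max_left _ _)
      have h2 : u (max i i₀) ∈ R := ⟨max i i₀, Set.mem_Ici.2 (le_max_right _ _), rfl⟩
      have h3 : u (max i i₀) ≤ sSup R := le_csSup hRfin.bddAbove h2
      show u i ≤ u N
      exact h1.trans (h3.trans_eq hNval.symm)
    · exact le_ciSup hbdd N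
  have hNpos : 0 < u N := lt_of_lt_of_le hi₀ (hmono hNi₀)
  rw [hsup]
  exact derives_chain hP N a hNpos
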